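/- arXiv:2501.04851 — 7 statements merged into one kernel-verified Lean document; each statement's English description precedes it below -/
import Mathlib

section
/- For every natural number n ≥ 7, the number ⌊n²/5⌋ is not prime. -/
theorem stmt0 (n : ℕ) (hn : 7 ≤ n) : ¬ Nat.Prime (n ^ 2 / 5) := by
  obtain ⟨q, r, hr, rfl⟩ : ∃ q r, r < 5 ∧ n = 5 * q + r :=
    ⟨n / 5, n % 5, Nat.mod_lt _ (by norm_num), (Nat.div_add_mod n 5).symm ▸ by omega⟩
  have key : ∀ a b : ℕ, (b < 5) → (5 * a + b) ^ 2 / 5 = 5 * a ^ 2 + 2 * a * b + b ^ 2 / 5 := by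
    intro a b hb
    have h : (5 * a + b) ^ 2 = b ^ 2 + (5 * a ^ 2 + 2 * a * b) * 5 := by ring
    rw [h, Nat.add_mul_div_right _ _ (by norm_num)]
    omega
  rw [key q r hr]
  interval_cases r
  · -- r = 0 : 5*q^2, q ≥ 2
    have hq : 2 ≤ q := by omega
    have : 5 * q ^ 2 + 2 * q * 0 + 0 ^ 2 / 5 = 5 * (q * q) := by ring_nf
    rw [this]
    exact Nat.not_prime_mul (by norm_num) (by nlinarith)
  · -- r = 1 : q*(5q+2), q ≥ 2
    have hq : 2 ≤ q := by omega
    have : 5 * q ^ 2 + 2 * q * 1 + 1 ^ 2 / 5 = q * (5 * q + 2) := by ring_nf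
    rw [this]
    exact Nat.not_prime_mul (by omega) (by omega)
  · -- r = 2 : q*(5q+4), q ≥ 1
    have hq : 1 ≤ q := by omega
    have : 5 * q ^ 2 + 2 * q * 2 + 2 ^ 2 / 5 = q * (5 * q + 4) := by ring_nf
    rw [this]
    rcases eq_or_lt_of_le hq with h | h
    · rw [← h]; norm_num
    · exact Nat.not_prime_mul (by omega) (by omega)
  · -- r = 3 : (5q+1)*(q+1)
    have hq : 1 ≤ q := by omega
    have : 5 * q ^ 2 + 2 * q * 3 + 3 ^ 2 / 5 = (5 * q + 1) * (q + 1) := by ring_nf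
    rw [this]
    exact Nat.not_prime_mul (by omega) (by omega)
  · -- r = 4 : (5q+3)*(q+1)
    have : 5 * q ^ 2 + 2 * q * 4 + 4 ^ 2 / 5 = (5 * q + 3) * (q + 1) := by ring_nf
    rw [this]
    exact Nat.not_prime_mul (by omega) (by omega)
end

section
/- Let d be an element of the set {2, 3, 4, 5, 8, 12, 16}. Then the sequence with general term ⌊n²/d⌋ is eventually prime-free; that is, there exists a natural number N such that for all n ≥ N, ⌊n²/d⌋ is not prime. -/
lemma aux_np {m : ℕ} (a b : ℕ) (ha : 2 ≤ a) (hb : 2 ≤ b) (h : m = a * b) : ¬ m.Prime := by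
  subst h
  exact Nat.not_prime_mul (by omega) (by omega)

theorem stmt1 (d : ℕ) (hd : d ∈ ({2, 3, 4, 5, 8, 12, 16} : Finset ℕ)) :
    ∃ N : ℕ, ∀ n : ℕ, N ≤ n → ¬ Nat.Prime (n ^ 2 / d) := by
  fin_cases hd
  · refine ⟨2*2, fun n hn => ?_⟩
    obtain ⟨q, r, hr, hq, rfl⟩ : ∃ q r, r < 2 ∧ 2 ≤ q ∧ n = 2*q + r :=
      ⟨n/2, n%2, by omega, by omega, by omega⟩
    rw [show (2*q+r)^2 / 2 = 2*q^2+2*q*r+r^2/2 from by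
      rw [show (2*q+r)^2 = 2*(2*q^2+2*q*r)+r^2 from by ring, Nat.mul_add_div (by norm_num)]]
    interval_cases r
    · exact aux_np ((2*q)) (q) (by omega) (by omega) (by norm_num; ring)
    · exact aux_np ((2*q)) ((q+1)) (by omega) (by omega) (by norm_num; ring)
  · refine ⟨2*3, fun n hn => ?_⟩
    obtain ⟨q, r, hr, hq, rfl⟩ : ∃ q r, r < 3 ∧ 2 ≤ q ∧ n = 3*q + r :=
      ⟨n/3, n%3, by omega, by omega, by omega⟩
    rw [show (3*q+r)^2 / 3 = 3*q^2+2*q*r+r^2/3 from by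
      rw [show (3*q+r)^2 = 3*(3*q^2+2*q*r)+r^2 from by ring, Nat.mul_add_div (by norm_num)]]
    interval_cases r
    · exact aux_np ((3*q)) (q) (by omega) (by omega) (by norm_num; ring)
    · exact aux_np (q) ((3*q+2)) (by omega) (by omega) (by norm_num; ring)
    · exact aux_np ((q+1)) ((3*q+1)) (by omega) (by omega) (by norm_num; ring)
  · refine ⟨2*4, fun n hn => ?_⟩
    obtain ⟨q, r, hr, hq, rfl⟩ : ∃ q r, r < 4 ∧ 2 ≤ q ∧ n = 4*q + r :=
      ⟨n/4, n%4, by omega, by omega, by omega⟩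
    rw [show (4*q+r)^2 / 4 = 4*q^2+2*q*r+r^2/4 from by
      rw [show (4*q+r)^2 = 4*(4*q^2+2*q*r)+r^2 from by ring, Nat.mul_add_div (by norm_num)]]
    interval_cases r
    · exact aux_np ((2*q)) ((2*q)) (by omega) (by omega) (by norm_num; ring)
    · exact aux_np ((2*q)) ((2*q+1)) (by omega) (by omega) (by norm_num; ring)
    · exact aux_np ((2*q+1)) ((2*q+1)) (by omega) (by omega) (by norm_num; ring)
    · exact aux_np ((2*q+2)) ((2*q+1)) (by omega) (by omega) (by norm_num; ring)
  · refine ⟨2*5, fun n hn => ?_⟩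
    obtain ⟨q, r, hr, hq, rfl⟩ : ∃ q r, r < 5 ∧ 2 ≤ q ∧ n = 5*q + r :=
      ⟨n/5, n%5, by omega, by omega, by omega⟩
    rw [show (5*q+r)^2 / 5 = 5*q^2+2*q*r+r^2/5 from by
      rw [show (5*q+r)^2 = 5*(5*q^2+2*q*r)+r^2 from by ring, Nat.mul_add_div (by norm_num)]]
    interval_cases r
    · exact aux_np ((5*q)) (q) (by omega) (by omega) (by norm_num; ring)
    · exact aux_np (q) ((5*q+2)) (by omega) (by omega) (by norm_num; ring)
    · exact aux_np (q) ((5*q+4)) (by omega) (by omega) (by norm_num; ring)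
    · exact aux_np ((q+1)) ((5*q+1)) (by omega) (by omega) (by norm_num; ring)
    · exact aux_np ((q+1)) ((5*q+3)) (by omega) (by omega) (by norm_num; ring)
  · refine ⟨2*8, fun n hn => ?_⟩
    obtain ⟨q, r, hr, hq, rfl⟩ : ∃ q r, r < 8 ∧ 2 ≤ q ∧ n = 8*q + r :=
      ⟨n/8, n%8, by omega, by omega, by omega⟩
    rw [show (8*q+r)^2 / 8 = 8*q^2+2*q*r+r^2/8 from by
      rw [show (8*q+r)^2 = 8*(8*q^2+2*q*r)+r^2 from by ring, Nat.mul_add_div (by norm_num)]]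
    interval_cases r
    · exact aux_np ((2*q)) ((4*q)) (by omega) (by omega) (by norm_num; ring)
    · exact aux_np ((2*q)) ((4*q+1)) (by omega) (by omega) (by norm_num; ring)
    · exact aux_np ((4*q)) ((2*q+1)) (by omega) (by omega) (by norm_num; ring)
    · exact aux_np ((2*q+1)) ((4*q+1)) (by omega) (by omega) (by norm_num; ring)
    · exact aux_np ((2*(2*q+1))) ((2*q+1)) (by omega) (by omega) (by norm_num; ring)
    · exact aux_np ((2*q+1)) ((4*q+3)) (by omega) (by omega) (by norm_num; ring)
    · exact aux_np ((4*(2*q+1))) ((q+1)) (by omega) (by omega) (by norm_num; ring)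
    · exact aux_np ((2*(4*q+3))) ((q+1)) (by omega) (by omega) (by norm_num; ring)
  · refine ⟨2*12, fun n hn => ?_⟩
    obtain ⟨q, r, hr, hq, rfl⟩ : ∃ q r, r < 12 ∧ 2 ≤ q ∧ n = 12*q + r :=
      ⟨n/12, n%12, by omega, by omega, by omega⟩
    rw [show (12*q+r)^2 / 12 = 12*q^2+2*q*r+r^2/12 from by
      rw [show (12*q+r)^2 = 12*(12*q^2+2*q*r)+r^2 from by ring, Nat.mul_add_div (by norm_num)]]
    interval_cases r
    · exact aux_np ((6*q)) ((2*q)) (by omega) (by omega) (by norm_num; ring)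
    · exact aux_np ((2*q)) ((6*q+1)) (by omega) (by omega) (by norm_num; ring)
    · exact aux_np ((4*q)) ((3*q+1)) (by omega) (by omega) (by norm_num; ring)
    · exact aux_np ((6*q)) ((2*q+1)) (by omega) (by omega) (by norm_num; ring)
    · exact aux_np ((2*q+1)) ((6*q+1)) (by omega) (by omega) (by norm_num; ring)
    · exact aux_np ((2*(2*q+1))) ((3*q+1)) (by omega) (by omega) (by norm_num; ring)
    · exact aux_np ((3*(2*q+1))) ((2*q+1)) (by omega) (by omega) (by norm_num; ring)
    · exact aux_np ((2*(2*q+1))) ((3*q+2)) (by omega) (by omega) (by norm_num; ring)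
    · exact aux_np ((2*q+1)) ((6*q+5)) (by omega) (by omega) (by norm_num; ring)
    · exact aux_np ((6*(2*q+1))) ((q+1)) (by omega) (by omega) (by norm_num; ring)
    · exact aux_np ((4*(3*q+2))) ((q+1)) (by omega) (by omega) (by norm_num; ring)
    · exact aux_np ((2*(q+1))) ((6*q+5)) (by omega) (by omega) (by norm_num; ring)
  · refine ⟨2*16, fun n hn => ?_⟩
    obtain ⟨q, r, hr, hq, rfl⟩ : ∃ q r, r < 16 ∧ 2 ≤ q ∧ n = 16*q + r :=
      ⟨n/16, n%16, by omega, by omega, by omega⟩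
    rw [show (16*q+r)^2 / 16 = 16*q^2+2*q*r+r^2/16 from by
      rw [show (16*q+r)^2 = 16*(16*q^2+2*q*r)+r^2 from by ring, Nat.mul_add_div (by norm_num)]]
    interval_cases r
    · exact aux_np ((4*q)) ((4*q)) (by omega) (by omega) (by norm_num; ring)
    · exact aux_np ((2*q)) ((8*q+1)) (by omega) (by omega) (by norm_num; ring)
    · exact aux_np ((4*q)) ((4*q+1)) (by omega) (by omega) (by norm_num; ring)
    · exact aux_np ((2*q)) ((8*q+3)) (by omega) (by omega) (by norm_num; ring)
    · exact aux_np ((4*q+1)) ((4*q+1)) (by omega) (by omega) (by norm_num; ring)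
    · exact aux_np ((2*q+1)) ((8*q+1)) (by omega) (by omega) (by norm_num; ring)
    · exact aux_np ((2*(2*q+1))) ((4*q+1)) (by omega) (by omega) (by norm_num; ring)
    · exact aux_np ((2*q+1)) ((8*q+3)) (by omega) (by omega) (by norm_num; ring)
    · exact aux_np ((4*(2*q+1))) ((2*q+1)) (by omega) (by omega) (by norm_num; ring)
    · exact aux_np ((2*q+1)) ((8*q+5)) (by omega) (by omega) (by norm_num; ring)
    · exact aux_np ((2*(2*q+1))) ((4*q+3)) (by omega) (by omega) (by norm_num; ring)
    · exact aux_np ((2*q+1)) ((8*q+7)) (by omega) (by omega) (by norm_num; ring)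
    · exact aux_np ((4*q+3)) ((4*q+3)) (by omega) (by omega) (by norm_num; ring)
    · exact aux_np ((2*(q+1))) ((8*q+5)) (by omega) (by omega) (by norm_num; ring)
    · exact aux_np ((4*(q+1))) ((4*q+3)) (by omega) (by omega) (by norm_num; ring)
    · exact aux_np ((2*(q+1))) ((8*q+7)) (by omega) (by omega) (by norm_num; ring)
end

section
/- Let t ≥ 2 and d ≥ 2 be integers, and let n ≥ 2d be a natural number with the property that there exists a natural number r with n^t ≡ r^t (mod d) and 0 ≤ r^t < d. Then ⌊n^t/d⌋ is not prime. -/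
theorem stmt3 (t d n : ℕ) (ht : 2 ≤ t) (hd : 2 ≤ d) (hn : 2 * d ≤ n)
    (h : ∃ r : ℕ, n ^ t ≡ r ^ t [MOD d] ∧ r ^ t < d) :
    ¬ Nat.Prime (n ^ t / d) := by
  obtain ⟨r, hmod, hrt⟩ := h
  intro hp
  have hd0 : 0 < d := by omega
  have hn0 : 0 < n := by omega
  have hrlt : r < d := lt_of_le_of_lt (Nat.le_self_pow (by omega) r) hrt
  have hmod' : n ^ t % d = r ^ t := by
    have h1 : n ^ t % d = r ^ t % d := hmod
    rwa [Nat.mod_eq_of_lt hrt] at h1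
  set q := n ^ t / d with hq
  have hrn : r ≤ n := by omega
  have hrtn : r ^ t ≤ n ^ t := Nat.pow_le_pow_left hrn t
  have hdq : d * q = n ^ t - r ^ t := by
    have h2 := Nat.div_add_mod (n ^ t) d
    rw [hmod'] at h2
    rw [hq]
    omega
  obtain ⟨s, hs⟩ := Nat.sub_dvd_pow_sub_pow n r t
  have hsub : (n - r) * s = n ^ t - r ^ t := hs.symm
  have heq : (n - r) * s = d * q := by rw [hsub, hdq]
  have hns : (n - r) * s ≤ n * s := Nat.mul_le_mul_right s (by omega)
  have hm : n ^ t = n * n ^ (t - 1) := by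
    conv_lhs => rw [show t = 1 + (t - 1) by omega, pow_add, pow_one]
  have h1 : (n - r) * s + r ^ t = n ^ t := by
    rw [hsub]; omega
  have hkey : n * n ^ (t - 1) ≤ n * s + r ^ t := by
    rw [← hm, ← h1]; linarith
  have hsm : n ^ (t - 1) ≤ s := by
    by_contra hc
    push_neg at hc
    have e1 : n * (s + 1) ≤ n * n ^ (t - 1) :=
      Nat.mul_le_mul_left n (by omega)
    have e2 : n * (s + 1) = n * s + n := by ring
    have e3 : r ^ t < n := by omega
    linarith
  have hns2 : n ≤ n ^ (t - 1) := by
    calc n = n ^ 1 := (pow_one n).symm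
    _ ≤ n ^ (t - 1) := Nat.pow_le_pow_right hn0 (by omega)
  have hsd : d < s := by omega
  have hqdvd : q ∣ (n - r) * s := ⟨d, by rw [heq, mul_comm]⟩
  rcases (Nat.Prime.dvd_mul hp).mp hqdvd with hc | hc
  · obtain ⟨k, hk⟩ := hc
    have hks : k * s = d := by
      have : q * (k * s) = q * d := by
        rw [← mul_assoc, ← hk, heq]; ring
      exact Nat.eq_of_mul_eq_mul_left hp.pos this
    have : s ≤ d := Nat.le_of_dvd hd0 ⟨k, by rw [← hks]; ring⟩
    omega
  · obtain ⟨k, hk⟩ := hc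
    have hks : (n - r) * k = d := by
      have : q * ((n - r) * k) = q * d := by
        have h3 := heq
        rw [hk] at h3
        calc q * ((n - r) * k) = (n - r) * (q * k) := by ring
        _ = d * q := h3
        _ = q * d := Nat.mul_comm d q
      exact Nat.eq_of_mul_eq_mul_left hp.pos this
    have : n - r ≤ d := Nat.le_of_dvd hd0 ⟨k, hks.symm⟩
    omega
end

section
/- For every even integer t ≥ 4, the sequence with general term ⌊n^t/24⌋ is eventually prime-free; that is, there exists a natural number N such that for all n ≥ N, ⌊n^t/24⌋ is not prime. -/
private lemma hdiv24 (A c : ℕ) (hc : c < 24) : (24 * A + c) / 24 = A := by omega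

private lemma key (u : ℕ) (hu : 100 ≤ u) (h4 : 2 ∣ u → 4 ∣ u) (h9 : 3 ∣ u → 9 ∣ u) :
    ¬ Nat.Prime (u ^ 2 / 24) := by
  obtain ⟨k, r, hr, rfl⟩ : ∃ k r, r < 12 ∧ u = 12 * k + r :=
    ⟨u / 12, u % 12, Nat.mod_lt _ (by norm_num), by omega⟩
  have hk : 2 ≤ k := by omega
  interval_cases r
  · -- r = 0 : 9 ∣ 12k → 3 ∣ k
    have h3 : 3 ∣ k := by
      have := h9 ⟨4 * k, by ring⟩
      omega
    obtain ⟨m, rfl⟩ := h3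
    have hq : (12 * (3 * m) + 0) ^ 2 / 24 = (6 * m) * (9 * m) := by
      rw [show (12 * (3 * m) + 0) ^ 2 = 24 * ((6 * m) * (9 * m)) + 0 by ring,
        hdiv24 _ _ (by norm_num)]
    rw [hq]
    exact Nat.not_prime_mul (by omega) (by omega)
  · -- r = 1
    have hq : (12 * k + 1) ^ 2 / 24 = k * (6 * k + 1) := by
      rw [show (12 * k + 1) ^ 2 = 24 * (k * (6 * k + 1)) + 1 by ring,
        hdiv24 _ _ (by norm_num)]
    rw [hq]
    exact Nat.not_prime_mul (by omega) (by omega)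
  · -- r = 2 : impossible
    exact absurd (h4 ⟨6 * k + 1, by ring⟩) (by omega)
  · -- r = 3 : 9 ∣ u forces k ≡ 2 [MOD 3]
    have h3 : 3 ∣ k + 1 := by
      have := h9 ⟨4 * k + 1, by ring⟩
      omega
    obtain ⟨m, hm⟩ := h3
    obtain ⟨m', rfl⟩ : ∃ m', k = 3 * m' + 2 := ⟨m - 1, by omega⟩
    have hq : (12 * (3 * m' + 2) + 3) ^ 2 / 24 = 3 * (18 * m' ^ 2 + 27 * m' + 10) := by
      rw [show (12 * (3 * m' + 2) + 3) ^ 2 = 24 * (3 * (18 * m' ^ 2 + 27 * m' + 10)) + 9 by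
        ring, hdiv24 _ _ (by norm_num)]
    rw [hq]
    exact Nat.not_prime_mul (by omega) (by nlinarith)
  · -- r = 4
    have hq : (12 * k + 4) ^ 2 / 24 = (2 * k) * (3 * k + 2) := by
      rw [show (12 * k + 4) ^ 2 = 24 * ((2 * k) * (3 * k + 2)) + 16 by ring,
        hdiv24 _ _ (by norm_num)]
    rw [hq]
    exact Nat.not_prime_mul (by omega) (by omega)
  · -- r = 5
    have hq : (12 * k + 5) ^ 2 / 24 = (2 * k + 1) * (3 * k + 1) := by
      rw [show (12 * k + 5) ^ 2 = 24 * ((2 * k + 1) * (3 * k + 1)) + 1 by ring,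
        hdiv24 _ _ (by norm_num)]
    rw [hq]
    exact Nat.not_prime_mul (by omega) (by omega)
  · -- r = 6 : impossible
    exact absurd (h4 ⟨6 * k + 3, by ring⟩) (by omega)
  · -- r = 7
    have hq : (12 * k + 7) ^ 2 / 24 = (2 * k + 1) * (3 * k + 2) := by
      rw [show (12 * k + 7) ^ 2 = 24 * ((2 * k + 1) * (3 * k + 2)) + 1 by ring,
        hdiv24 _ _ (by norm_num)]
    rw [hq]
    exact Nat.not_prime_mul (by omega) (by omega)
  · -- r = 8
    have hq : (12 * k + 8) ^ 2 / 24 = (2 * k + 2) * (3 * k + 1) := by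
      rw [show (12 * k + 8) ^ 2 = 24 * ((2 * k + 2) * (3 * k + 1)) + 16 by ring,
        hdiv24 _ _ (by norm_num)]
    rw [hq]
    exact Nat.not_prime_mul (by omega) (by omega)
  · -- r = 9 : 9 ∣ u forces 3 ∣ k
    have h3 : 3 ∣ k := by
      have := h9 ⟨4 * k + 3, by ring⟩
      omega
    obtain ⟨m, rfl⟩ := h3
    have hq : (12 * (3 * m) + 9) ^ 2 / 24 = 3 * (18 * m ^ 2 + 9 * m + 1) := by
      rw [show (12 * (3 * m) + 9) ^ 2 = 24 * (3 * (18 * m ^ 2 + 9 * m + 1)) + 9 by ring,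
        hdiv24 _ _ (by norm_num)]
    rw [hq]
    exact Nat.not_prime_mul (by omega) (by nlinarith)
  · -- r = 10 : impossible
    exact absurd (h4 ⟨6 * k + 5, by ring⟩) (by omega)
  · -- r = 11
    have hq : (12 * k + 11) ^ 2 / 24 = (k + 1) * (6 * k + 5) := by
      rw [show (12 * k + 11) ^ 2 = 24 * ((k + 1) * (6 * k + 5)) + 1 by ring,
        hdiv24 _ _ (by norm_num)]
    rw [hq]
    exact Nat.not_prime_mul (by omega) (by omega)

theorem stmt7 (t : ℕ) (ht : 4 ≤ t) (hte : Even t) :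
    ∃ N : ℕ, ∀ n : ℕ, N ≤ n → ¬ Nat.Prime (n ^ t / 24) := by
  obtain ⟨s, hs⟩ := hte
  refine ⟨100, fun n hn => ?_⟩
  have hs2 : 2 ≤ s := by omega
  have hpow : n ^ t = (n ^ s) ^ 2 := by
    rw [← pow_mul, show s * 2 = t by omega]
  rw [hpow]
  apply key
  · exact le_trans hn (Nat.le_self_pow (by omega) n)
  · intro h2
    have hn2 : 2 ∣ n := Nat.Prime.dvd_of_dvd_pow Nat.prime_two h2
    obtain ⟨c, rfl⟩ := hn2
    exact dvd_trans ⟨c ^ 2, by ring⟩ (pow_dvd_pow _ hs2)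
  · intro h3
    have hn3 : 3 ∣ n := Nat.Prime.dvd_of_dvd_pow Nat.prime_three h3
    obtain ⟨c, rfl⟩ := hn3
    exact dvd_trans ⟨c ^ 2, by ring⟩ (pow_dvd_pow _ hs2)
end

section
/- Let p be an odd prime. Then the sequence with general term ⌊n^(p-1)/p⌋ is eventually prime-free; that is, there exists a natural number N such that for all n ≥ N, ⌊n^(p-1)/p⌋ is not prime. -/
theorem stmt10 (p : ℕ) (hp : Nat.Prime p) (hodd : Odd p) :
    ∃ N : ℕ, ∀ n : ℕ, N ≤ n → ¬ Nat.Prime (n ^ (p - 1) / p) := by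
  have hp2 : 2 ≤ p := hp.two_le
  have hp3 : 3 ≤ p := by
    rcases Nat.lt_or_ge p 3 with h | h
    · interval_cases p
      exact absurd hodd (by decide)
    · exact h
  obtain ⟨k, hk⟩ : ∃ k, p - 1 = 2 * k := by
    obtain ⟨m, hm⟩ := hodd
    exact ⟨m, by omega⟩
  have hk1 : 1 ≤ k := by omega
  refine ⟨p + 2, fun n hn => ?_⟩
  have hn1 : 1 ≤ n := by omega
  by_cases hdvd : p ∣ n
  · obtain ⟨m, hm⟩ := hdvd
    have hm2 : 2 ≤ m := by nlinarith [hm ▸ hn]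
    have hcalc : n ^ (p - 1) / p = p ^ (p - 2) * m ^ (p - 1) := by
      have h1 : n ^ (p - 1) = p * (p ^ (p - 2) * m ^ (p - 1)) := by
        rw [hm, mul_pow]
        have h2 : p ^ (p - 1) = p * p ^ (p - 2) := by
          rw [← pow_succ']
          congr 1
          omega
        rw [h2]; ring
      rw [h1, Nat.mul_div_cancel_left _ hp.pos]
    rw [hcalc]
    exact Nat.not_prime_mul
      (Nat.one_lt_pow (by omega) (by omega)).ne'
      (Nat.one_lt_pow (by omega) (by omega)).ne'
  · have hcop : Nat.Coprime n p := (hp.coprime_iff_not_dvd.mpr hdvd).symm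
    have hfermat : n ^ (p - 1) % p = 1 := by
      have h := Nat.ModEq.pow_totient hcop
      rw [Nat.totient_prime hp] at h
      have h' : n ^ (p - 1) % p = 1 % p := h
      rwa [Nat.mod_eq_of_lt hp.one_lt] at h'
    have heq : n ^ (p - 1) = p * (n ^ (p - 1) / p) + 1 := by
      conv_lhs => rw [← Nat.div_add_mod (n ^ (p - 1)) p]
      rw [hfermat]
    have haN : p + 2 ≤ n ^ k := le_trans hn (Nat.le_self_pow (by omega) n)
    have hsq : n ^ (p - 1) = n ^ k * n ^ k := by
      rw [hk, two_mul, pow_add]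
    have h1 : (n ^ k - 1) * (n ^ k + 1) + 1 = n ^ k * n ^ k := by
      obtain ⟨b, hb⟩ : ∃ b, n ^ k = b + 1 := ⟨n ^ k - 1, by omega⟩
      rw [hb]
      simp only [Nat.add_sub_cancel]
      ring
    have hprod : p * (n ^ (p - 1) / p) = (n ^ k - 1) * (n ^ k + 1) := by
      have h2 : p * (n ^ (p - 1) / p) + 1 = (n ^ k - 1) * (n ^ k + 1) + 1 := by
        rw [h1, ← hsq]; exact heq.symm
      omega
    have hdvd2 : p ∣ (n ^ k - 1) * (n ^ k + 1) := ⟨_, hprod.symm⟩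
    rcases (Nat.Prime.dvd_mul hp).mp hdvd2 with h | h
    · obtain ⟨c, hc⟩ := h
      have hc2 : 2 ≤ c := by
        by_contra hcon
        push_neg at hcon
        have h5 : p * c ≤ p * 1 := Nat.mul_le_mul_left p (by omega)
        omega
      have hqeq : n ^ (p - 1) / p = c * (n ^ k + 1) := by
        have h3 : p * (n ^ (p - 1) / p) = p * (c * (n ^ k + 1)) := by rw [hprod, hc]; ring
        exact Nat.eq_of_mul_eq_mul_left hp.pos h3
      rw [hqeq]
      exact Nat.not_prime_mul (by omega) (by omega)
    · obtain ⟨c, hc⟩ := h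
      have hc2 : 2 ≤ c := by
        by_contra hcon
        push_neg at hcon
        have h5 : p * c ≤ p * 1 := Nat.mul_le_mul_left p (by omega)
        omega
      have hqeq : n ^ (p - 1) / p = (n ^ k - 1) * c := by
        have h3 : p * (n ^ (p - 1) / p) = p * ((n ^ k - 1) * c) := by rw [hprod, hc]; ring
        exact Nat.eq_of_mul_eq_mul_left hp.pos h3
      rw [hqeq]
      exact Nat.not_prime_mul (by omega) (by omega)
end

section
/- Let p be an odd prime such that p = q² + 1 for some natural number q. Then the sequence with general term ⌊n^((p-1)/2)/p⌋ is eventually prime-free; that is, there exists a natural number N such that for all n ≥ N, ⌊n^((p-1)/2)/p⌋ is not prime. -/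
lemma aux_not_prime {a b : ℕ} (ha : 2 ≤ a) (hb : 2 ≤ b) : ¬ Nat.Prime (a * b) :=
  Nat.not_prime_mul (by omega) (by omega)

lemma aux_s {p s M : ℕ} (h : p * s = M) (hp : 1 ≤ p) (hM : 2 * p + 1 ≤ M) : 2 ≤ s := by
  by_contra hs
  push_neg at hs
  have : p * s ≤ p * 1 := Nat.mul_le_mul_left p (by omega)
  omega

theorem stmt11 (p q : ℕ) (hp : Nat.Prime p) (hodd : Odd p) (hq : p = q ^ 2 + 1) :
    ∃ N : ℕ, ∀ n : ℕ, N ≤ n → ¬ Nat.Prime (n ^ ((p - 1) / 2) / p) := by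
  haveI := Fact.mk hp
  obtain ⟨k, hk⟩ : ∃ k, q = 2 * k := by
    rcases Nat.even_or_odd q with h | h
    · obtain ⟨r, hr⟩ := h; exact ⟨r, by omega⟩
    · exfalso
      have h2 : Odd (q ^ 2) := h.pow
      have hev : Even p := by rw [hq]; exact h2.add_one
      exact (Nat.not_odd_iff_even.mpr hev) hodd
  have hq1 : 1 ≤ q := by
    rcases Nat.eq_zero_or_pos q with h | h
    · exfalso; rw [h] at hq; norm_num at hq; rw [hq] at hp; norm_num at hp
    · exact h
  have hk1 : 1 ≤ k := by omega
  have hp2 : 2 ≤ p := hp.two_le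
  have hkk : 1 ≤ k ^ 2 := Nat.one_le_pow _ _ (by omega)
  have hq4 : q ^ 2 = 4 * k ^ 2 := by rw [hk]; ring
  set e := (p - 1) / 2 with hedef
  have he : e = 2 * k ^ 2 := by
    have h1 : p = 4 * k ^ 2 + 1 := by rw [hq, hq4]
    rw [hedef]
    generalize k ^ 2 = K at h1 ⊢
    omega
  have he2 : 2 ≤ e := by linarith
  have h2e : 2 * e + 1 = p := by
    have : q ^ 2 + 1 = p := hq.symm
    linarith
  refine ⟨2 * p + q + 2, fun n hn => ?_⟩
  set m := n ^ (k ^ 2) with hm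
  have hmn : n ≤ m := Nat.le_self_pow (by omega) n
  have hm2 : n ^ e = m ^ 2 := by rw [he, hm, ← pow_mul, mul_comm]
  by_cases hdvd : p ∣ n
  · -- p ∣ n
    obtain ⟨a, ha⟩ := hdvd
    have ha2 : 2 ≤ a := aux_s ha.symm (by omega) (by omega)
    obtain ⟨E, hE⟩ : ∃ E, e = E + 1 := ⟨e - 1, by omega⟩
    have hE1 : 1 ≤ E := by omega
    have hfac : n ^ e = p * (a * n ^ E) := by
      rw [hE, pow_succ]
      rw [ha]; ring
    rw [hfac, Nat.mul_div_cancel_left _ (show 0 < p by omega)]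
    exact aux_not_prime ha2 (le_trans (by omega) (Nat.le_self_pow (by omega) n))
  · -- p ∤ n
    have hx : (n : ZMod p) ≠ 0 := by
      rw [Ne, ZMod.natCast_eq_zero_iff]
      exact hdvd
    have hfer : ((n : ZMod p)) ^ (p - 1) = 1 := ZMod.pow_card_sub_one_eq_one hx
    have hsq : ((n : ZMod p) ^ e) * ((n : ZMod p) ^ e) = 1 := by
      rw [← pow_add, ← two_mul, show 2 * e = p - 1 by omega]
      exact hfer
    rcases mul_self_eq_one_iff.mp hsq with h1 | h1
    · -- n^e ≡ 1 [MOD p]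
      have hc : ((n ^ e : ℕ) : ZMod p) = ((1 : ℕ) : ZMod p) := by push_cast; simpa using h1
      have hmod : n ^ e % p = 1 := by
        have hme := (ZMod.natCast_eq_natCast_iff _ _ _).mp hc
        have h1p : 1 % p = 1 := Nat.mod_eq_of_lt (by omega)
        have hthis : n ^ e % p = 1 % p := hme
        rw [h1p] at hthis
        exact hthis
      set t := n ^ e / p with htdef
      have ht : p * t + 1 = n ^ e := by
        have h := Nat.div_add_mod (n ^ e) p
        rw [hmod] at h
        exact h
      obtain ⟨M, hM⟩ : ∃ M, m = M + 1 := ⟨m - 1, by omega⟩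
      have hMbig : 2 * p + q + 1 ≤ M := by omega
      have hPT : p * t = M * (M + 2) := by
        rw [hm2, hM] at ht
        have hr : (M + 1) ^ 2 = M * (M + 2) + 1 := by ring
        linarith
      rcases (Nat.Prime.dvd_mul hp).mp ⟨t, hPT.symm⟩ with hd | hd
      · obtain ⟨s, hs⟩ := hd
        have hts : t = s * (M + 2) := by
          apply Nat.eq_of_mul_eq_mul_left (show 0 < p by omega)
          rw [hPT, hs]; ring
        rw [hts]
        exact aux_not_prime (aux_s hs.symm (by omega) (by omega)) (by omega)
      · obtain ⟨s, hs⟩ := hd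
        have hts : t = M * s := by
          apply Nat.eq_of_mul_eq_mul_left (show 0 < p by omega)
          rw [hPT, hs]; ring
        rw [hts]
        exact aux_not_prime (by omega) (aux_s hs.symm (by omega) (by omega))
    · -- n^e ≡ -1 [MOD p]
      have hdvd1 : p ∣ n ^ e + 1 := by
        have hc : ((n ^ e + 1 : ℕ) : ZMod p) = 0 := by push_cast [h1]; ring
        exact (ZMod.natCast_eq_zero_iff _ _).mp hc
      have hmod : n ^ e % p + 1 = p := by
        have hlt : n ^ e % p < p := Nat.mod_lt _ (by omega)
        have hdr : p ∣ n ^ e % p + 1 := by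
          have hh : n ^ e + 1 = p * (n ^ e / p) + (n ^ e % p + 1) := by
            have h := Nat.div_add_mod (n ^ e) p; linarith
          rw [hh] at hdvd1
          exact (Nat.dvd_add_right (dvd_mul_right p _)).mp hdvd1
        have := Nat.le_of_dvd (by omega) hdr
        omega
      set t := n ^ e / p with htdef
      have h := Nat.div_add_mod (n ^ e) p
      rw [← htdef] at h
      have hkey : p * t + p = m ^ 2 + 1 := by linarith [hm2]
      obtain ⟨M, hM⟩ : ∃ M, m = M + q := ⟨m - q, by omega⟩
      have hMbig : 2 * p + 2 ≤ M := by omega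
      have hPT : p * t = M * (M + 2 * q) := by
        rw [hM] at hkey
        have hr : (M + q) ^ 2 = M * (M + 2 * q) + q ^ 2 := by ring
        linarith
      rcases (Nat.Prime.dvd_mul hp).mp ⟨t, hPT.symm⟩ with hd | hd
      · obtain ⟨s, hs⟩ := hd
        have hts : t = s * (M + 2 * q) := by
          apply Nat.eq_of_mul_eq_mul_left (show 0 < p by omega)
          rw [hPT, hs]; ring
        rw [hts]
        exact aux_not_prime (aux_s hs.symm (by omega) (by omega)) (by omega)
      · obtain ⟨s, hs⟩ := hd
        have hts : t = M * s := by
          apply Nat.eq_of_mul_eq_mul_left (show 0 < p by omega)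
          rw [hPT, hs]; ring
        rw [hts]
        exact aux_not_prime (by omega) (aux_s hs.symm (by omega) (by omega))
end

section
/- Let p be an odd prime and let c be an integer such that -c-1 is a quadratic nonresidue modulo p, i.e., there is no integer x with x² ≡ -c-1 (mod p). For each integer n ≥ 1, define q_n = ⌊(p-1)!·(n² + c)/p⌋ (the floor of the rational number (p-1)!(n²+c)/p). Then for every n ≥ 1 there exists a prime number r < p such that r divides q_n. -/
theorem stmt13 (p : ℕ) (hp : Nat.Prime p) (hodd : Odd p) (c : ℤ)
    (hc : ¬ ∃ x : ℤ, x ^ 2 ≡ -c - 1 [ZMOD (p : ℤ)]) :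
    ∀ n : ℤ, 1 ≤ n →
      ∃ r : ℕ, Nat.Prime r ∧ r < p ∧
        (r : ℤ) ∣ Int.fdiv ((Nat.factorial (p - 1) : ℤ) * (n ^ 2 + c)) (p : ℤ) := by
  haveI : Fact p.Prime := ⟨hp⟩
  intro n hn
  have hp2 : p ≠ 2 := by
    rintro rfl; exact (Nat.not_odd_iff_even.mpr even_two) hodd
  have hp3 : 3 ≤ p := by
    have := hp.two_le; omega
  set m : ℤ := n ^ 2 + c with hm
  set N : ℤ := (Nat.factorial (p - 1) : ℤ) * m with hN
  have hppos : (0:ℤ) < p := by exact_mod_cast hp.pos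
  have hfd : N.fdiv p = N / p := Int.fdiv_eq_ediv_of_nonneg N (le_of_lt hppos)
  set q : ℤ := N / p with hq
  set s : ℤ := N % p with hs
  have hqs : (p:ℤ) * q + s = N := Int.mul_ediv_add_emod N p
  have hs0 : 0 ≤ s := Int.emod_nonneg N (ne_of_gt hppos)
  have hslt : s < p := Int.emod_lt_of_pos N hppos
  -- Wilson's theorem
  have hW : (p:ℤ) ∣ (Nat.factorial (p-1) : ℤ) + 1 := by
    have h := ZMod.wilsons_lemma p
    have h2 : (((Nat.factorial (p-1) : ℤ) + 1 : ℤ) : ZMod p) = 0 := by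
      push_cast
      rw [h]; ring
    exact (ZMod.intCast_zmod_eq_zero_iff_dvd _ p).mp h2
  have hNm : (p:ℤ) ∣ N + m := by
    rw [show N + m = ((Nat.factorial (p-1) : ℤ) + 1) * m by rw [hN]; ring]
    exact hW.mul_right m
  have hmp : ¬ (p:ℤ) ∣ m + 1 := by
    intro h
    apply hc
    refine ⟨n, Int.ModEq.symm (Int.modEq_iff_dvd.mpr ?_)⟩
    rw [show n ^ 2 - (-c - 1) = m + 1 by rw [hm]; ring]
    exact h
  have hsm : (p:ℤ) ∣ s + m := by
    have h1 : (p:ℤ) ∣ N - s := ⟨q, by linarith [hqs]⟩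
    have := dvd_sub hNm h1
    rwa [show N + m - (N - s) = s + m by ring] at this
  have hs1 : s ≠ 1 := by
    intro h
    apply hmp
    rwa [h, add_comm] at hsm
  rcases eq_or_lt_of_le hs0 with h0 | hpos
  · -- s = 0 : use r = 2
    refine ⟨2, Nat.prime_two, by omega, ?_⟩
    rw [hfd]
    have h2fac : (2:ℤ) ∣ (Nat.factorial (p-1) : ℤ) := by
      exact_mod_cast Int.natCast_dvd_natCast.mpr (Nat.dvd_factorial two_pos (by omega))
    have h2N : (2:ℤ) ∣ (p:ℤ) * q := by
      rw [show (p:ℤ) * q = N - s from by linarith [hqs], ← h0, sub_zero, hN]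
      exact h2fac.mul_right m
    rcases (Int.prime_two.dvd_mul.mp h2N) with h | h
    · exfalso
      have : (2:ℕ) ∣ p := by exact_mod_cast h
      exact (Nat.not_even_iff_odd.mpr hodd) ((even_iff_two_dvd).mpr this)
    · exact h
  · -- s ≥ 1, hence s ≥ 2
    have hs2 : 2 ≤ s := by omega
    set r : ℕ := s.toNat.minFac with hr
    have hst : 2 ≤ s.toNat := by omega
    have hrp : Nat.Prime r := Nat.minFac_prime (by omega)
    have hrle : r ≤ s.toNat := Nat.minFac_le (by omega)
    have hrltp : r < p := by
      have : s.toNat < p := by omega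
      omega
    refine ⟨r, hrp, hrltp, ?_⟩
    rw [hfd]
    have hrs : (r:ℤ) ∣ s := by
      have : (r:ℤ) ∣ (s.toNat : ℤ) := Int.natCast_dvd_natCast.mpr (Nat.minFac_dvd _)
      rwa [Int.toNat_of_nonneg hs0] at this
    have hrfac : (r:ℤ) ∣ (Nat.factorial (p-1) : ℤ) :=
      Int.natCast_dvd_natCast.mpr (Nat.dvd_factorial hrp.pos (by omega))
    have hrpq : (r:ℤ) ∣ (p:ℤ) * q := by
      rw [show (p:ℤ) * q = N - s from by linarith [hqs], hN]
      exact dvd_sub (hrfac.mul_right m) hrs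
    rcases ((Nat.prime_iff_prime_int.mp hrp).dvd_mul.mp hrpq) with h | h
    · exfalso
      have hd : r ∣ p := by exact_mod_cast h
      have := (Nat.prime_dvd_prime_iff_eq hrp hp).mp hd
      omega
    · exact h
end
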